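/- arXiv:2311.11763 — 6 statements merged into one kernel-verified Lean document; each statement's English description precedes it below -/
import Mathlib

section
/- Let L be a commutative ring, f, g ∈ L, let (φ, ψ) be a matrix factorization of f of size n and (φ', ψ') a matrix factorization of g of size m over L. Define the 2nm × 2nm block matrices E' = [[1ₙ ⊗ φ', ψ ⊗ 1ₘ], [φ ⊗ 1ₘ, −(1ₙ ⊗ ψ')]] and F' = [[1ₙ ⊗ ψ', ψ ⊗ 1ₘ], [φ ⊗ 1ₘ, −(1ₙ ⊗ φ')]]. Then E'·F' = (f + g)·I and F'·E' = (f + g)·I; that is, the first variant of the Yoshino tensor product is a matrix factorization of f + g of size 2nm. -/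
open Matrix Kronecker

/-- Auxiliary block computation for the Yoshino tensor product. -/
theorem yoshino_aux {L : Type*} [CommRing L] (f g : L) (n m : ℕ)
    (a b : Matrix (Fin n) (Fin n) L) (c d : Matrix (Fin m) (Fin m) L)
    (h1 : a * b = f • 1) (h2 : b * a = f • 1)
    (h3 : c * d = g • 1) (h4 : d * c = g • 1) :
    Matrix.fromBlocks ((1 : Matrix (Fin n) (Fin n) L) ⊗ₖ c) (b ⊗ₖ (1 : Matrix (Fin m) (Fin m) L))
        (a ⊗ₖ (1 : Matrix (Fin m) (Fin m) L)) (-((1 : Matrix (Fin n) (Fin n) L) ⊗ₖ d)) *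
      Matrix.fromBlocks ((1 : Matrix (Fin n) (Fin n) L) ⊗ₖ d) (b ⊗ₖ (1 : Matrix (Fin m) (Fin m) L))
        (a ⊗ₖ (1 : Matrix (Fin m) (Fin m) L)) (-((1 : Matrix (Fin n) (Fin n) L) ⊗ₖ c)) =
      (f + g) • 1 := by
  have key : ((f+g) • (1 : Matrix ((Fin n × Fin m) ⊕ (Fin n × Fin m)) _ L)) =
      fromBlocks ((f+g) • (1 : Matrix (Fin n × Fin m) (Fin n × Fin m) L)) 0 0
        ((f+g) • (1 : Matrix (Fin n × Fin m) (Fin n × Fin m) L)) := by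
    rw [← fromBlocks_one, fromBlocks_smul]
    simp
  simp only [fromBlocks_multiply, Matrix.mul_neg, Matrix.neg_mul, neg_neg,
    ← mul_kronecker_mul, h1, h2, h3, h4, Matrix.one_mul, Matrix.mul_one,
    smul_kronecker, kronecker_smul, one_kronecker_one, add_neg_cancel, key, add_smul,
    add_comm (g • (1 : Matrix (Fin n × Fin m) (Fin n × Fin m) L))]

/-- The first variant of the Yoshino tensor product of a matrix factorization of `f`
and a matrix factorization of `g` is a matrix factorization of `f + g`. -/
theorem yoshino_tensor_product_first_variant_is_matrix_factorization
    {L : Type*} [CommRing L] (f g : L) (n m : ℕ)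
    (φ ψ : Matrix (Fin n) (Fin n) L) (φ' ψ' : Matrix (Fin m) (Fin m) L)
    (hφψ : φ * ψ = f • (1 : Matrix (Fin n) (Fin n) L))
    (hψφ : ψ * φ = f • (1 : Matrix (Fin n) (Fin n) L))
    (hφψ' : φ' * ψ' = g • (1 : Matrix (Fin m) (Fin m) L))
    (hψφ' : ψ' * φ' = g • (1 : Matrix (Fin m) (Fin m) L)) :
    Matrix.fromBlocks ((1 : Matrix (Fin n) (Fin n) L) ⊗ₖ φ') (ψ ⊗ₖ (1 : Matrix (Fin m) (Fin m) L))
        (φ ⊗ₖ (1 : Matrix (Fin m) (Fin m) L)) (-((1 : Matrix (Fin n) (Fin n) L) ⊗ₖ ψ')) *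
      Matrix.fromBlocks ((1 : Matrix (Fin n) (Fin n) L) ⊗ₖ ψ') (ψ ⊗ₖ (1 : Matrix (Fin m) (Fin m) L))
        (φ ⊗ₖ (1 : Matrix (Fin m) (Fin m) L)) (-((1 : Matrix (Fin n) (Fin n) L) ⊗ₖ φ')) =
      (f + g) • 1 ∧
    Matrix.fromBlocks ((1 : Matrix (Fin n) (Fin n) L) ⊗ₖ ψ') (ψ ⊗ₖ (1 : Matrix (Fin m) (Fin m) L))
        (φ ⊗ₖ (1 : Matrix (Fin m) (Fin m) L)) (-((1 : Matrix (Fin n) (Fin n) L) ⊗ₖ φ')) *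
      Matrix.fromBlocks ((1 : Matrix (Fin n) (Fin n) L) ⊗ₖ φ') (ψ ⊗ₖ (1 : Matrix (Fin m) (Fin m) L))
        (φ ⊗ₖ (1 : Matrix (Fin m) (Fin m) L)) (-((1 : Matrix (Fin n) (Fin n) L) ⊗ₖ ψ')) =
      (f + g) • 1 := by
  exact ⟨yoshino_aux f g n m φ ψ φ' ψ' hφψ hψφ hφψ' hψφ',
    yoshino_aux f g n m φ ψ ψ' φ' hφψ hψφ hψφ' hφψ'⟩
end

section
/- Let L be a commutative ring, f, g ∈ L, let (φ, ψ) be a matrix factorization of f of size n and (φ', ψ') a matrix factorization of g of size m over L. Define the 2nm × 2nm block matrices E'' = [[ψ ⊗ 1ₘ, −(1ₙ ⊗ ψ')], [1ₙ ⊗ φ', φ ⊗ 1ₘ]] and F'' = [[φ ⊗ 1ₘ, 1ₙ ⊗ ψ'], [−(1ₙ ⊗ φ'), ψ ⊗ 1ₘ]]. Then E''·F'' = (f + g)·I and F''·E'' = (f + g)·I; that is, the second variant of the Yoshino tensor product is a matrix factorization of f + g of size 2nm. -/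
open Matrix Kronecker

/-- The second variant of the Yoshino tensor product of a matrix factorization of `f`
and a matrix factorization of `g` is a matrix factorization of `f + g`. -/
theorem yoshino_tensor_product_second_variant_is_matrix_factorization
    {L : Type*} [CommRing L] (f g : L) (n m : ℕ)
    (φ ψ : Matrix (Fin n) (Fin n) L) (φ' ψ' : Matrix (Fin m) (Fin m) L)
    (hφψ : φ * ψ = f • (1 : Matrix (Fin n) (Fin n) L))
    (hψφ : ψ * φ = f • (1 : Matrix (Fin n) (Fin n) L))
    (hφψ' : φ' * ψ' = g • (1 : Matrix (Fin m) (Fin m) L))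
    (hψφ' : ψ' * φ' = g • (1 : Matrix (Fin m) (Fin m) L)) :
    Matrix.fromBlocks (ψ ⊗ₖ (1 : Matrix (Fin m) (Fin m) L)) (-((1 : Matrix (Fin n) (Fin n) L) ⊗ₖ ψ'))
        ((1 : Matrix (Fin n) (Fin n) L) ⊗ₖ φ') (φ ⊗ₖ (1 : Matrix (Fin m) (Fin m) L)) *
      Matrix.fromBlocks (φ ⊗ₖ (1 : Matrix (Fin m) (Fin m) L)) ((1 : Matrix (Fin n) (Fin n) L) ⊗ₖ ψ')
        (-((1 : Matrix (Fin n) (Fin n) L) ⊗ₖ φ')) (ψ ⊗ₖ (1 : Matrix (Fin m) (Fin m) L)) =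
      (f + g) • 1 ∧
    Matrix.fromBlocks (φ ⊗ₖ (1 : Matrix (Fin m) (Fin m) L)) ((1 : Matrix (Fin n) (Fin n) L) ⊗ₖ ψ')
        (-((1 : Matrix (Fin n) (Fin n) L) ⊗ₖ φ')) (ψ ⊗ₖ (1 : Matrix (Fin m) (Fin m) L)) *
      Matrix.fromBlocks (ψ ⊗ₖ (1 : Matrix (Fin m) (Fin m) L)) (-((1 : Matrix (Fin n) (Fin n) L) ⊗ₖ ψ'))
        ((1 : Matrix (Fin n) (Fin n) L) ⊗ₖ φ') (φ ⊗ₖ (1 : Matrix (Fin m) (Fin m) L)) =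
      (f + g) • 1 := by
  constructor <;>
  · rw [Matrix.fromBlocks_multiply, ← Matrix.fromBlocks_one, Matrix.fromBlocks_smul]
    simp only [Matrix.neg_mul, Matrix.mul_neg, neg_neg, ← Matrix.mul_kronecker_mul,
      hφψ, hψφ, hφψ', hψφ', Matrix.one_mul, Matrix.mul_one, one_mul, mul_one,
      Matrix.smul_kronecker, Matrix.kronecker_smul, Matrix.one_kronecker_one,
      add_smul, smul_zero, neg_add_cancel, add_neg_cancel]
    abel
end

section
/- Let L be a commutative ring, f, g ∈ L, let (φ, ψ) be a matrix factorization of f of size n and (φ', ψ') a matrix factorization of g of size m over L. Define the 2nm × 2nm block matrices E''' = [[−(1ₙ ⊗ ψ'), φ ⊗ 1ₘ], [ψ ⊗ 1ₘ, 1ₙ ⊗ φ']] and F''' = [[−(1ₙ ⊗ φ'), φ ⊗ 1ₘ], [ψ ⊗ 1ₘ, 1ₙ ⊗ ψ']]. Then E'''·F''' = (f + g)·I and F'''·E''' = (f + g)·I; that is, the third variant of the Yoshino tensor product is a matrix factorization of f + g of size 2nm. -/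
open Matrix Kronecker

lemma aux {L : Type*} [CommRing L] (f g : L) (n m : ℕ)
    (φ ψ : Matrix (Fin n) (Fin n) L) (φ' ψ' : Matrix (Fin m) (Fin m) L)
    (hφψ : φ * ψ = f • (1 : Matrix (Fin n) (Fin n) L))
    (hψφ : ψ * φ = f • (1 : Matrix (Fin n) (Fin n) L))
    (hφψ' : φ' * ψ' = g • (1 : Matrix (Fin m) (Fin m) L))
    (hψφ' : ψ' * φ' = g • (1 : Matrix (Fin m) (Fin m) L)) :
    Matrix.fromBlocks (-((1 : Matrix (Fin n) (Fin n) L) ⊗ₖ ψ')) (φ ⊗ₖ (1 : Matrix (Fin m) (Fin m) L))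
        (ψ ⊗ₖ (1 : Matrix (Fin m) (Fin m) L)) ((1 : Matrix (Fin n) (Fin n) L) ⊗ₖ φ') *
      Matrix.fromBlocks (-((1 : Matrix (Fin n) (Fin n) L) ⊗ₖ φ')) (φ ⊗ₖ (1 : Matrix (Fin m) (Fin m) L))
        (ψ ⊗ₖ (1 : Matrix (Fin m) (Fin m) L)) ((1 : Matrix (Fin n) (Fin n) L) ⊗ₖ ψ') =
      (f + g) • 1 := by
  simp only [fromBlocks_multiply, neg_mul, mul_neg, neg_neg, ← mul_kronecker_mul,
    one_mul, mul_one, hψφ', hφψ', hφψ, hψφ, neg_add_cancel, smul_kronecker, kronecker_smul,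
    one_kronecker_one, ← fromBlocks_one, fromBlocks_smul, smul_zero, add_smul]
  rw [fromBlocks_add, add_zero,
    add_comm (g • (1 : Matrix (Fin n × Fin m) (Fin n × Fin m) L)) (f • 1)]
/-- The third variant of the Yoshino tensor product of a matrix factorization of `f`
and a matrix factorization of `g` is a matrix factorization of `f + g`. -/
theorem yoshino_tensor_product_third_variant_is_matrix_factorization
    {L : Type*} [CommRing L] (f g : L) (n m : ℕ)
    (φ ψ : Matrix (Fin n) (Fin n) L) (φ' ψ' : Matrix (Fin m) (Fin m) L)
    (hφψ : φ * ψ = f • (1 : Matrix (Fin n) (Fin n) L))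
    (hψφ : ψ * φ = f • (1 : Matrix (Fin n) (Fin n) L))
    (hφψ' : φ' * ψ' = g • (1 : Matrix (Fin m) (Fin m) L))
    (hψφ' : ψ' * φ' = g • (1 : Matrix (Fin m) (Fin m) L)) :
    Matrix.fromBlocks (-((1 : Matrix (Fin n) (Fin n) L) ⊗ₖ ψ')) (φ ⊗ₖ (1 : Matrix (Fin m) (Fin m) L))
        (ψ ⊗ₖ (1 : Matrix (Fin m) (Fin m) L)) ((1 : Matrix (Fin n) (Fin n) L) ⊗ₖ φ') *
      Matrix.fromBlocks (-((1 : Matrix (Fin n) (Fin n) L) ⊗ₖ φ')) (φ ⊗ₖ (1 : Matrix (Fin m) (Fin m) L))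
        (ψ ⊗ₖ (1 : Matrix (Fin m) (Fin m) L)) ((1 : Matrix (Fin n) (Fin n) L) ⊗ₖ ψ') =
      (f + g) • 1 ∧
    Matrix.fromBlocks (-((1 : Matrix (Fin n) (Fin n) L) ⊗ₖ φ')) (φ ⊗ₖ (1 : Matrix (Fin m) (Fin m) L))
        (ψ ⊗ₖ (1 : Matrix (Fin m) (Fin m) L)) ((1 : Matrix (Fin n) (Fin n) L) ⊗ₖ ψ') *
      Matrix.fromBlocks (-((1 : Matrix (Fin n) (Fin n) L) ⊗ₖ ψ')) (φ ⊗ₖ (1 : Matrix (Fin m) (Fin m) L))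
        (ψ ⊗ₖ (1 : Matrix (Fin m) (Fin m) L)) ((1 : Matrix (Fin n) (Fin n) L) ⊗ₖ φ') =
      (f + g) • 1 := by
  exact ⟨aux f g n m φ ψ φ' ψ' hφψ hψφ hφψ' hψφ', aux f g n m φ ψ ψ' φ' hφψ hψφ hψφ' hφψ'⟩
end

section
/- Let A be a commutative ring, f, g ∈ A, and let X⁰, X¹, Y⁰, Y¹ be A-modules equipped with A-linear maps d⁰_X : X⁰ → X¹, d¹_X : X¹ → X⁰, d⁰_Y : Y⁰ → Y¹, d¹_Y : Y¹ → Y⁰ satisfying d¹_X ∘ d⁰_X = f·id, d⁰_X ∘ d¹_X = f·id, d¹_Y ∘ d⁰_Y = g·id, d⁰_Y ∘ d¹_Y = g·id. Define A-linear maps D⁰ : (X⁰ ⊗ Y¹) ⊕ (X¹ ⊗ Y⁰) → (X¹ ⊗ Y¹) ⊕ (X⁰ ⊗ Y⁰) by D⁰(u, v) = ((d⁰_X ⊗ id)(u) + (id ⊗ d⁰_Y)(v), −(id ⊗ d¹_Y)(u) + (d¹_X ⊗ id)(v)), and D¹ : (X¹ ⊗ Y¹) ⊕ (X⁰ ⊗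 Y⁰) → (X⁰ ⊗ Y¹) ⊕ (X¹ ⊗ Y⁰) by D¹(u, v) = ((d¹_X ⊗ id)(u) − (id ⊗ d⁰_Y)(v), (id ⊗ d¹_Y)(u) + (d⁰_X ⊗ id)(v)). Then D¹ ∘ D⁰ = (f + g)·id and D⁰ ∘ D¹ = (f + g)·id; that is, the Yoshino tensor product of the two factorizations is a factorization of f + g. -/
open TensorProduct

private lemma map_comp_eq_smul {A : Type*} [CommRing A] {c : A}
    {M0 M1 N : Type*} [AddCommGroup M0] [AddCommGroup M1] [AddCommGroup N]
    [Module A M0] [Module A M1] [Module A N]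
    (p : M0 →ₗ[A] M1) (q : M1 →ₗ[A] M0) (h : q ∘ₗ p = c • LinearMap.id)
    (u : M0 ⊗[A] N) :
    TensorProduct.map q LinearMap.id (TensorProduct.map p LinearMap.id u) = c • u := by
  rw [← LinearMap.comp_apply, ← TensorProduct.map_comp, h, LinearMap.id_comp,
    TensorProduct.map_smul_left, LinearMap.smul_apply, TensorProduct.map_id, LinearMap.id_apply]

private lemma map_comp_eq_smul' {A : Type*} [CommRing A] {c : A}
    {M0 M1 N : Type*} [AddCommGroup M0] [AddCommGroup M1] [AddCommGroup N]
    [Module A M0] [Module A M1] [Module A N]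
    (p : M0 →ₗ[A] M1) (q : M1 →ₗ[A] M0) (h : q ∘ₗ p = c • LinearMap.id)
    (u : N ⊗[A] M0) :
    TensorProduct.map LinearMap.id q (TensorProduct.map LinearMap.id p u) = c • u := by
  rw [← LinearMap.comp_apply, ← TensorProduct.map_comp, h, LinearMap.id_comp,
    TensorProduct.map_smul_right, LinearMap.smul_apply, TensorProduct.map_id, LinearMap.id_apply]

private lemma map_map_comm {A : Type*} [CommRing A]
    {M0 M1 N0 N1 : Type*} [AddCommGroup M0] [AddCommGroup M1] [AddCommGroup N0]
    [AddCommGroup N1] [Module A M0] [Module A M1] [Module A N0] [Module A N1]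
    (p : M0 →ₗ[A] M1) (q : N0 →ₗ[A] N1) (u : M0 ⊗[A] N0) :
    TensorProduct.map p LinearMap.id (TensorProduct.map LinearMap.id q u) =
      TensorProduct.map LinearMap.id q (TensorProduct.map p LinearMap.id u) := by
  rw [← LinearMap.comp_apply, ← LinearMap.comp_apply, ← TensorProduct.map_comp,
    ← TensorProduct.map_comp, LinearMap.id_comp, LinearMap.comp_id, LinearMap.id_comp,
    LinearMap.comp_id]

/-- The Yoshino tensor product of a factorization of `f` and a factorization of `g`
(given in module form) is a factorization of `f + g`. -/
theorem yoshino_tensor_product_of_module_factorizations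
    {A : Type*} [CommRing A] (f g : A)
    {X0 X1 Y0 Y1 : Type*}
    [AddCommGroup X0] [AddCommGroup X1] [AddCommGroup Y0] [AddCommGroup Y1]
    [Module A X0] [Module A X1] [Module A Y0] [Module A Y1]
    (dX0 : X0 →ₗ[A] X1) (dX1 : X1 →ₗ[A] X0)
    (dY0 : Y0 →ₗ[A] Y1) (dY1 : Y1 →ₗ[A] Y0)
    (hX0 : dX1 ∘ₗ dX0 = f • LinearMap.id)
    (hX1 : dX0 ∘ₗ dX1 = f • LinearMap.id)
    (hY0 : dY1 ∘ₗ dY0 = g • LinearMap.id)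
    (hY1 : dY0 ∘ₗ dY1 = g • LinearMap.id)
    (D0 : (X0 ⊗[A] Y1) × (X1 ⊗[A] Y0) →ₗ[A] (X1 ⊗[A] Y1) × (X0 ⊗[A] Y0))
    (D1 : (X1 ⊗[A] Y1) × (X0 ⊗[A] Y0) →ₗ[A] (X0 ⊗[A] Y1) × (X1 ⊗[A] Y0))
    (hD0 : ∀ u : X0 ⊗[A] Y1, ∀ v : X1 ⊗[A] Y0,
      D0 (u, v) =
        (TensorProduct.map dX0 LinearMap.id u + TensorProduct.map LinearMap.id dY0 v,
         -(TensorProduct.map LinearMap.id dY1 u) + TensorProduct.map dX1 LinearMap.id v))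
    (hD1 : ∀ u : X1 ⊗[A] Y1, ∀ v : X0 ⊗[A] Y0,
      D1 (u, v) =
        (TensorProduct.map dX1 LinearMap.id u - TensorProduct.map LinearMap.id dY0 v,
         TensorProduct.map LinearMap.id dY1 u + TensorProduct.map dX0 LinearMap.id v)) :
    D1 ∘ₗ D0 = (f + g) • LinearMap.id ∧ D0 ∘ₗ D1 = (f + g) • LinearMap.id := by
  constructor
  · apply LinearMap.ext
    rintro ⟨u, v⟩
    rw [LinearMap.comp_apply, hD0, hD1]
    simp only [map_add, map_neg, map_sub, LinearMap.smul_apply, LinearMap.id_apply,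
      Prod.smul_mk, Prod.mk.injEq, Prod.smul_fst, Prod.smul_snd]
    constructor
    · rw [map_comp_eq_smul dX0 dX1 hX0, map_comp_eq_smul' dY1 dY0 hY1,
        map_map_comm dX1 dY0 v, add_smul]
      abel
    · rw [map_comp_eq_smul' dY0 dY1 hY0, map_comp_eq_smul dX1 dX0 hX1,
        map_map_comm dX0 dY1 u, add_smul]
      abel
  · apply LinearMap.ext
    rintro ⟨u, v⟩
    rw [LinearMap.comp_apply, hD1, hD0]
    simp only [map_add, map_neg, map_sub, LinearMap.smul_apply, LinearMap.id_apply,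
      Prod.smul_mk, Prod.mk.injEq, Prod.smul_fst, Prod.smul_snd]
    constructor
    · rw [map_comp_eq_smul dX1 dX0 hX1, map_comp_eq_smul' dY1 dY0 hY1,
        map_map_comm dX0 dY0 v, add_smul]
      abel
    · rw [map_comp_eq_smul' dY0 dY1 hY0, map_comp_eq_smul dX0 dX1 hX0,
        map_map_comm dX1 dY1 u, add_smul]
      abel
end

section
/- Let A be a commutative ring, M an A-module, E = Λ(M) the exterior algebra of M over A, and for i = 1,…,n let v_i ∈ M and φ_i : M → A be A-linear forms such that φ_j(v_i) = 0 whenever i ≠ j. Define the A-linear map D : E → E by D(y) = Σ_{i=1}^n (ι(v_i)·y + φ_i⌟y). Then D(D(y)) = (Σ_{i=1}^n φ_i(v_i))·y for every y ∈ E; that is, the Koszul-type differential D makes E a linear factorization of Σ_i φ_i(v_i). (This is the key computation showing that the unit object Δ_f, with v_i = (x_i − x'_i)θ_i and φ_i = ∂_i(f)θ_i*, is a matrix factorization of f(x) − f(x').) -/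
/-- On the exterior algebra `Λ(M)`, the Koszul-type map
`D(y) = Σᵢ (ι(vᵢ)·y + φᵢ⌟y)`, with `φⱼ(vᵢ) = 0` for `i ≠ j`, squares to
multiplication by `Σᵢ φᵢ(vᵢ)`: `(Λ(M), D)` is a linear factorization of
`Σᵢ φᵢ(vᵢ)`.  This is the key computation showing that the unit object `Δ_f`
is a matrix factorization of `f(x) − f(x')`. -/
theorem koszul_sum_differential_squares_to_scalar
    {A M : Type*} [CommRing A] [AddCommGroup M] [Module A M] (n : ℕ)
    (v : Fin n → M) (φ : Fin n → Module.Dual A M)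
    (hortho : ∀ i j : Fin n, i ≠ j → φ j (v i) = 0)
    (D : ExteriorAlgebra A M →ₗ[A] ExteriorAlgebra A M)
    (hD : ∀ y : ExteriorAlgebra A M,
      D y = ∑ i : Fin n, (ExteriorAlgebra.ι A (v i) * y +
        CliffordAlgebra.contractLeft (Q := (0 : QuadraticForm A M)) (φ i) y)) :
    ∀ y : ExteriorAlgebra A M, D (D y) = (∑ i : Fin n, φ i (v i)) • y := by
  intro y
  set V : M := ∑ i, v i with hV
  set Φ : Module.Dual A M := ∑ i, φ i with hΦ
  have hD' : ∀ z : ExteriorAlgebra A M, D z = ExteriorAlgebra.ι A V * z +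
      CliffordAlgebra.contractLeft (Q := (0 : QuadraticForm A M)) Φ z := by
    intro z
    rw [hD, hV, hΦ, map_sum, Finset.sum_mul, map_sum, LinearMap.sum_apply,
      Finset.sum_add_distrib]
  rw [hD' y, hD']
  rw [mul_add, map_add, ← mul_assoc, ExteriorAlgebra.ι_sq_zero, zero_mul,
    CliffordAlgebra.contractLeft_ι_mul, CliffordAlgebra.contractLeft_contractLeft]
  have hΦV : Φ V = ∑ i : Fin n, φ i (v i) := by
    rw [hΦ, hV, LinearMap.sum_apply]
    refine Finset.sum_congr rfl fun j _ => ?_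
    rw [map_sum]
    exact Finset.sum_eq_single j (fun i _ hij => hortho i j hij)
      (fun h => absurd (Finset.mem_univ j) h)
  rw [← hΦV]
  abel
end

section
/- Let A and B be commutative rings, M an A-module, E = Λ(M) the exterior algebra of M over A, and let π₀ : E → A be the projection onto θ-degree 0 (Mathlib's algebraMapInv, the algebra map to A killing ι(M)). Let ε : A → B be a ring homomorphism, and for i = 1,…,n let v_i ∈ M and φ_i : M → A be A-linear forms such that ε(φ_i(w)) = 0 for all w ∈ M and all i. Define D : E → E by D(y) = Σ_{i=1}^n (ι(v_i)·y + φ_i⌟y) and π := ε ∘ π₀ : E → B. Then π(D(y)) = 0 for all y ∈ E; that is, π is a chain map from (E, D) to B equipped with the zero differential. (This is the statement that the canonical projection π : Δ_f → R, the composite of projection to θ-degree 0 with the multiplication map R ⊗ R → R, is a morphism of factorizations.) -/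
lemma aux_pi0_iota {A M : Type*} [CommRing A] [AddCommGroup M] [Module A M] (x : M) :
    ExteriorAlgebra.algebraMapInv (ExteriorAlgebra.ι A x) = 0 := by
  simp [ExteriorAlgebra.algebraMapInv]

lemma aux_contract {A B M : Type*} [CommRing A] [CommRing B] [AddCommGroup M] [Module A M]
    (ε : A →+* B) (φ : Module.Dual A M) (hφ : ∀ w : M, ε (φ w) = 0)
    (y : ExteriorAlgebra A M) :
    ε (ExteriorAlgebra.algebraMapInv
      (CliffordAlgebra.contractLeft (Q := (0 : QuadraticForm A M)) φ y)) = 0 := by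
  induction y using CliffordAlgebra.left_induction with
  | algebraMap r => simp [CliffordAlgebra.contractLeft_algebraMap]
  | add x y hx hy => simp [map_add, hx, hy]
  | ι_mul m x hx =>
    rw [CliffordAlgebra.contractLeft_ι_mul]
    have : ExteriorAlgebra.algebraMapInv
        (CliffordAlgebra.ι (0 : QuadraticForm A M) x) = 0 := aux_pi0_iota x
    simp [hφ, this]

/-- If `ε : A → B` kills every value of every linear form `φᵢ`, then the
composite `π = ε ∘ π₀` of the projection `π₀ : Λ(M) → A` to `θ`-degree `0` with
`ε` annihilates the image of the Koszul-type differential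
`D(y) = Σᵢ (ι(vᵢ)·y + φᵢ⌟y)`; that is, `π` is a chain map from `(Λ(M), D)` to
`B` with the zero differential (the canonical projection `π : Δ_f → R` is a
morphism of factorizations). -/
theorem projection_is_chain_map
    {A B M : Type*} [CommRing A] [CommRing B] [AddCommGroup M] [Module A M]
    (ε : A →+* B) (n : ℕ)
    (v : Fin n → M) (φ : Fin n → Module.Dual A M)
    (hφ : ∀ (i : Fin n) (w : M), ε (φ i w) = 0)
    (D : ExteriorAlgebra A M →ₗ[A] ExteriorAlgebra A M)
    (hD : ∀ y : ExteriorAlgebra A M,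
      D y = ∑ i : Fin n, (ExteriorAlgebra.ι A (v i) * y +
        CliffordAlgebra.contractLeft (Q := (0 : QuadraticForm A M)) (φ i) y)) :
    ∀ y : ExteriorAlgebra A M, ε (ExteriorAlgebra.algebraMapInv (D y)) = 0 := by
  intro y
  rw [hD, map_sum, map_sum]
  refine Finset.sum_eq_zero fun i _ => ?_
  rw [map_add, map_add, map_mul, aux_pi0_iota]
  simp [aux_contract ε (φ i) (hφ i) y]
end
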